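/- Let φ : (0,∞) → (0,∞) be a function (not necessarily continuous) such that y² φ(y) → ∞ as y → ∞. Then there exists a nondecreasing function R : (0,∞) → (0,∞) such that y / R(y)² → 0 and y φ(R(y)) → ∞ as y → ∞. -/

import Mathlib

open Filter Set

/-- Gmira–Veron: If `y² φ(y) → ∞` as `y → ∞`, there is a
nondecreasing `R : (0,∞) → (0,∞)` with `y / R(y)² → 0` and `y φ(R(y)) → ∞`. -/
theorem stmt_11 (φ : ℝ → ℝ) (hφpos : ∀ y : ℝ, 0 < y → 0 < φ y)
    (hφ : Filter.Tendsto (fun y => y ^ 2 * φ y) Filter.atTop Filter.atTop) :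
    ∃ R : ℝ → ℝ, (∀ y : ℝ, 0 < y → 0 < R y) ∧
      (∀ y z : ℝ, 0 < y → y ≤ z → R y ≤ R z) ∧
      Filter.Tendsto (fun y => y / R y ^ 2) Filter.atTop (nhds 0) ∧
      Filter.Tendsto (fun y => y * φ (R y)) Filter.atTop Filter.atTop := by
  classical
  set f : ℝ → ℝ := fun z => z ^ 2 * φ z with hf
  set m : ℝ → ℝ := fun t => sInf (f '' Ici (max t 1)) with hmdef
  have hne : ∀ t : ℝ, (f '' Ici (max t 1)).Nonempty := fun t => ⟨f (max t 1), ⟨max t 1, Set.mem_Ici.mpr le_rfl, rfl⟩⟩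
  have hbdd : ∀ t : ℝ, BddBelow (f '' Ici (max t 1)) := by
    intro t
    refine ⟨0, ?_⟩
    rintro x ⟨z, hz, rfl⟩
    have hz1 : (1:ℝ) ≤ z := le_trans (le_max_right _ _) hz
    exact mul_nonneg (sq_nonneg z) (hφpos z (by linarith)).le
  have hmnonneg : ∀ t : ℝ, 0 ≤ m t := by
    intro t
    refine le_csInf (hne t) ?_
    rintro x ⟨z, hz, rfl⟩
    have hz1 : (1:ℝ) ≤ z := le_trans (le_max_right _ _) hz
    exact mul_nonneg (sq_nonneg z) (hφpos z (by linarith)).le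
  have hmmono : ∀ t t' : ℝ, t ≤ t' → m t ≤ m t' := by
    intro t t' h
    exact csInf_le_csInf (hbdd t) (hne t')
      (Set.image_mono (f := f) (Set.Ici_subset_Ici.mpr (max_le_max h le_rfl)))
  have hmle : ∀ t z : ℝ, max t 1 ≤ z → m t ≤ f z := by
    intro t z hz
    exact csInf_le (hbdd t) ⟨z, hz, rfl⟩
  have hmtop : Tendsto m atTop atTop := by
    rw [tendsto_atTop]
    intro M
    obtain ⟨T, hT⟩ := (tendsto_atTop.mp hφ M).exists_forall_of_atTop
    filter_upwards [eventually_ge_atTop T] with t ht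
    refine le_csInf (hne t) ?_
    rintro x ⟨z, hz, rfl⟩
    exact hT z (le_trans (le_trans ht (le_max_left t 1)) hz)
  set s : ℝ → ℝ := fun y => Real.sqrt (m (Real.sqrt y)) with hsdef
  have hsmono : ∀ y z : ℝ, y ≤ z → s y ≤ s z := fun y z h =>
    Real.sqrt_le_sqrt (hmmono _ _ (Real.sqrt_le_sqrt h))
  have hstop : Tendsto s atTop atTop := by
    have h1 : Tendsto Real.sqrt atTop atTop := by
      rw [tendsto_atTop]; intro M
      filter_upwards [eventually_ge_atTop (M ^ 2)] with y hy
      calc M ≤ |M| := le_abs_self M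
        _ = Real.sqrt (M ^ 2) := (Real.sqrt_sq_eq_abs M).symm
        _ ≤ Real.sqrt y := Real.sqrt_le_sqrt hy
    exact h1.comp (hmtop.comp h1)
  set w : ℝ → ℝ := fun y => max 1 (min y (s y)) with hwdef
  have hw1 : ∀ y, (1:ℝ) ≤ w y := fun y => le_max_left _ _
  have hwmono : ∀ y z : ℝ, y ≤ z → w y ≤ w z := fun y z h =>
    max_le_max le_rfl (min_le_min h (hsmono y z h))
  have hwtop : Tendsto w atTop atTop := by
    rw [tendsto_atTop]
    intro M
    filter_upwards [eventually_ge_atTop M, hstop.eventually_ge_atTop M] with y hy hs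
    exact le_trans (le_min hy hs) (le_max_right _ _)
  refine ⟨fun y => Real.sqrt (y * w y), ?_, ?_, ?_, ?_⟩
  · intro y hy
    exact Real.sqrt_pos.mpr (mul_pos hy (lt_of_lt_of_le one_pos (hw1 y)))
  · intro y z hy hyz
    refine Real.sqrt_le_sqrt ?_
    have hwy : 0 ≤ w y := le_trans zero_le_one (hw1 y)
    exact mul_le_mul hyz (hwmono y z hyz) hwy (le_trans hy.le hyz)
  · have heq : (fun y => y / Real.sqrt (y * w y) ^ 2) =ᶠ[atTop] fun y => (w y)⁻¹ := by
      filter_upwards [eventually_gt_atTop 0] with y hy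
      have hwy : 0 < w y := lt_of_lt_of_le one_pos (hw1 y)
      rw [Real.sq_sqrt (mul_nonneg hy.le hwy.le)]
      field_simp
    exact Tendsto.congr' heq.symm (tendsto_inv_atTop_zero.comp hwtop)
  · refine tendsto_atTop_mono' atTop ?_ hstop
    filter_upwards [eventually_ge_atTop 1, hstop.eventually_ge_atTop 1] with y hy1 hs1
    have hwy : 0 < w y := lt_of_lt_of_le one_pos (hw1 y)
    have hwle : w y ≤ s y := max_le (le_trans hs1 le_rfl) (min_le_right _ _) |>.trans_eq rfl
    set Ry := Real.sqrt (y * w y) with hRy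
    have hyw1 : (1:ℝ) ≤ y * w y := le_trans hy1 (le_mul_of_one_le_right (by linarith) (hw1 y))
    have hRsq : Ry ^ 2 = y * w y := Real.sq_sqrt (by linarith)
    have hR1 : (1:ℝ) ≤ Ry := by
      rw [hRy, show (1:ℝ) = Real.sqrt 1 by simp]
      exact Real.sqrt_le_sqrt hyw1
    have hRsqrty : Real.sqrt y ≤ Ry := by
      refine Real.sqrt_le_sqrt ?_
      nlinarith [hw1 y]
    have hmle' : m (Real.sqrt y) ≤ f Ry := hmle _ _ (max_le hRsqrty hR1)
    have hss : s y * s y = m (Real.sqrt y) := Real.mul_self_sqrt (hmnonneg _)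
    have hkey : s y * w y ≤ (y * φ Ry) * w y := by
      have : m (Real.sqrt y) ≤ y * w y * φ Ry := by
        have := hmle'
        rw [hf] at this
        simpa [hRsq] using this
      calc s y * w y ≤ s y * s y := by nlinarith [hsmono 1 y hy1]
        _ = m (Real.sqrt y) := hss
        _ ≤ y * w y * φ Ry := this
        _ = (y * φ Ry) * w y := by ring
    exact le_of_mul_le_mul_right hkey hwy
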